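/- In the braid group B_n, the BKL generators satisfy a_{i,k} a_{i,j} = a_{j,k} a_{i,k} for all 1 ≤ i < j < k ≤ n. -/

import Mathlib

/-- Artin relations for the braid group on `n` strands (generators `σ_1,…,σ_{n-1}`,
indexed by natural numbers; superfluous generators `σ_0` and `σ_i` for `i > n-1`
are killed by extra relations). -/
def braidRels (n : ℕ) : Set (FreeGroup ℕ) :=
  { r | (∃ i j : ℕ, 1 ≤ i ∧ i + 2 ≤ j ∧ j ≤ n - 1 ∧
        r = FreeGroup.of i * FreeGroup.of j * (FreeGroup.of i)⁻¹ * (FreeGroup.of j)⁻¹) ∨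
      (∃ i : ℕ, 1 ≤ i ∧ i + 1 ≤ n - 1 ∧
        r = FreeGroup.of i * FreeGroup.of (i + 1) * FreeGroup.of i *
          (FreeGroup.of (i + 1))⁻¹ * (FreeGroup.of i)⁻¹ * (FreeGroup.of (i + 1))⁻¹) ∨
      (∃ i : ℕ, (i = 0 ∨ n - 1 < i) ∧ r = FreeGroup.of i) }

/-- The braid group `B_n` on `n` strands, with the Artin presentation. -/
def BraidGroup (n : ℕ) : Type := PresentedGroup (braidRels n)

instance (n : ℕ) : Group (BraidGroup n) :=
  inferInstanceAs (Group (PresentedGroup (braidRels n)))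

/-- The Artin generator `σ_i` of `B_n` (meaningful for `1 ≤ i ≤ n-1`). -/
def σ (n i : ℕ) : BraidGroup n := PresentedGroup.of i

/-- The product `σ_i σ_{i+1} ⋯ σ_{j-2}` in `B_n`. -/
def bklPre (n i j : ℕ) : BraidGroup n := ((List.range' i (j - 1 - i)).map (σ n)).prod

/-- The BKL (band) generator
`a_{i,j} = (σ_i ⋯ σ_{j-2}) σ_{j-1} (σ_i ⋯ σ_{j-2})⁻¹` of `B_n`, for `1 ≤ i < j ≤ n`. -/
def bkl (n i j : ℕ) : BraidGroup n := bklPre n i j * σ n (j - 1) * (bklPre n i j)⁻¹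

/-- The dual Garside element `δ = σ_1 σ_2 ⋯ σ_{n-1}` of `B_n`. -/
def δb (n : ℕ) : BraidGroup n := ((List.range' 1 (n - 1)).map (σ n)).prod

/- ### Auxiliary lemmas -/

lemma braid_mk_one {n : ℕ} {r : FreeGroup ℕ} (h : r ∈ braidRels n) :
    PresentedGroup.mk (braidRels n) r = 1 :=
  (QuotientGroup.eq_one_iff r).mpr (Subgroup.subset_normalClosure h)

lemma sigma_def (n i : ℕ) : σ n i = PresentedGroup.mk (braidRels n) (FreeGroup.of i) := rfl

lemma sigma_eq_one {n i : ℕ} (h : i = 0 ∨ n - 1 < i) : σ n i = 1 := by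
  rw [sigma_def]
  exact braid_mk_one (Or.inr (Or.inr ⟨i, h, rfl⟩))

lemma sigma_comm (n : ℕ) {i m : ℕ} (h : i + 2 ≤ m) : Commute (σ n i) (σ n m) := by
  rcases Nat.eq_zero_or_pos i with hi | hi
  · rw [hi, sigma_eq_one (Or.inl rfl)]; exact Commute.one_left _
  rcases le_or_gt m (n - 1) with hm | hm
  · have hr : FreeGroup.of i * FreeGroup.of m * (FreeGroup.of i)⁻¹ * (FreeGroup.of m)⁻¹
        ∈ braidRels n := Or.inl ⟨i, m, hi, h, hm, rfl⟩
    have h1 := braid_mk_one hr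
    simp only [map_mul, map_inv, ← sigma_def] at h1
    show σ n i * σ n m = σ n m * σ n i
    calc σ n i * σ n m
        = (σ n i * σ n m * (σ n i)⁻¹ * (σ n m)⁻¹) * (σ n m * σ n i) := by group
      _ = σ n m * σ n i := by erw [h1, one_mul]
  · rw [sigma_eq_one (Or.inr hm)]; exact Commute.one_right _

lemma braid_rel (n : ℕ) {i : ℕ} (h1 : 1 ≤ i) (h2 : i + 1 ≤ n - 1) :
    σ n i * σ n (i + 1) * σ n i = σ n (i + 1) * σ n i * σ n (i + 1) := by
  have hr : FreeGroup.of i * FreeGroup.of (i + 1) * FreeGroup.of i *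
      (FreeGroup.of (i + 1))⁻¹ * (FreeGroup.of i)⁻¹ * (FreeGroup.of (i + 1))⁻¹
      ∈ braidRels n := Or.inr (Or.inl ⟨i, h1, h2, rfl⟩)
  have h3 := braid_mk_one hr
  simp only [map_mul, map_inv, ← sigma_def] at h3
  calc σ n i * σ n (i + 1) * σ n i
      = (σ n i * σ n (i + 1) * σ n i * (σ n (i + 1))⁻¹ * (σ n i)⁻¹ * (σ n (i + 1))⁻¹) *
          (σ n (i + 1) * σ n i * σ n (i + 1)) := by group
    _ = σ n (i + 1) * σ n i * σ n (i + 1) := by erw [h3, one_mul]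

/-- The conjugation identity `σ_m σ_{m+1} σ_m⁻¹ = σ_{m+1}⁻¹ σ_m σ_{m+1}`. -/
lemma braid_conj (n : ℕ) {m : ℕ} (h1 : 1 ≤ m) (h2 : m + 1 ≤ n - 1) :
    σ n m * σ n (m + 1) * (σ n m)⁻¹ = (σ n (m + 1))⁻¹ * σ n m * σ n (m + 1) := by
  have b := braid_rel n h1 h2
  calc σ n m * σ n (m + 1) * (σ n m)⁻¹
      = (σ n (m + 1))⁻¹ * (σ n (m + 1) * σ n m * σ n (m + 1)) * (σ n m)⁻¹ := by group
    _ = (σ n (m + 1))⁻¹ * (σ n m * σ n (m + 1) * σ n m) * (σ n m)⁻¹ := by rw [b]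
    _ = (σ n (m + 1))⁻¹ * σ n m * σ n (m + 1) := by group

lemma comm_bklPre (n : ℕ) {m i j : ℕ} (h : j ≤ m) : Commute (σ n m) (bklPre n i j) := by
  refine Commute.list_prod_right _ _ fun x hx => ?_
  obtain ⟨a, ha, rfl⟩ := List.mem_map.1 hx
  rw [List.mem_range'_1] at ha
  exact (sigma_comm n (show a + 2 ≤ m by omega)).symm

lemma comm_bkl (n : ℕ) {m i j : ℕ} (hj : 1 ≤ j) (h : j + 1 ≤ m) : Commute (σ n m) (bkl n i j) := by
  unfold bkl
  exact ((comm_bklPre n (by omega)).mul_right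
    ((sigma_comm n (show (j - 1) + 2 ≤ m by omega)).symm)).mul_right
    (comm_bklPre n (by omega)).inv_right

lemma bklPre_succ (n : ℕ) {i j : ℕ} (h : i + 1 ≤ j) :
    bklPre n i (j + 1) = bklPre n i j * σ n (j - 1) := by
  unfold bklPre
  have h1 : j + 1 - 1 - i = (j - 1 - i) + 1 := by omega
  rw [h1, List.range'_concat, List.map_append, List.prod_append]
  have h2 : i + 1 * (j - 1 - i) = j - 1 := by omega
  rw [h2]
  simp

/-- The recurrence `a_{i,k+1} = σ_k⁻¹ a_{i,k} σ_k`. -/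
lemma bkl_rec (n : ℕ) {i k : ℕ} (h1 : 1 ≤ i) (hik : i + 1 ≤ k) (hkn : k + 1 ≤ n) :
    bkl n i (k + 1) = (σ n k)⁻¹ * bkl n i k * σ n k := by
  have hconj : σ n (k - 1) * σ n k * (σ n (k - 1))⁻¹ = (σ n k)⁻¹ * σ n (k - 1) * σ n k := by
    have hk : k - 1 + 1 = k := by omega
    have := braid_conj n (m := k - 1) (by omega) (by omega)
    rwa [hk] at this
  have c : Commute (σ n k) (bklPre n i k) := comm_bklPre n le_rfl
  have hs : bkl n i (k + 1) =
      bklPre n i k * (σ n (k - 1) * σ n k * (σ n (k - 1))⁻¹) * (bklPre n i k)⁻¹ := by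
    rw [bkl, bklPre_succ n hik, Nat.add_sub_cancel]
    group
  rw [hs, hconj, bkl]
  have cl := c.inv_left.eq
  have cr := c.inv_left.inv_right.eq
  calc bklPre n i k * ((σ n k)⁻¹ * σ n (k - 1) * σ n k) * (bklPre n i k)⁻¹
      = bklPre n i k * (σ n k)⁻¹ * σ n (k - 1) * σ n k * (bklPre n i k)⁻¹ := by group
    _ = (σ n k)⁻¹ * bklPre n i k * σ n (k - 1) * σ n k * (bklPre n i k)⁻¹ := by rw [← cl]
    _ = (σ n k)⁻¹ * bklPre n i k * σ n (k - 1) * ((bklPre n i k)⁻¹ * σ n k) := by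
        rw [← c.inv_right.eq]; group
    _ = (σ n k)⁻¹ * (bklPre n i k * σ n (k - 1) * (bklPre n i k)⁻¹) * σ n k := by group

lemma bkl_base (n : ℕ) {i j : ℕ} (h1 : 1 ≤ i) (hij : i < j) (hjn : j + 1 ≤ n) :
    bkl n i (j + 1) * bkl n i j = bkl n j (j + 1) * bkl n i (j + 1) := by
  have hbkljj : bkl n j (j + 1) = σ n j := by
    simp [bkl, bklPre, Nat.add_sub_cancel, Nat.sub_self]
  have cP : Commute (σ n j) (bklPre n i j) := comm_bklPre n le_rfl
  have hs : bkl n i (j + 1) =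
      bklPre n i j * (σ n (j - 1) * σ n j * (σ n (j - 1))⁻¹) * (bklPre n i j)⁻¹ := by
    rw [bkl, bklPre_succ n hij, Nat.add_sub_cancel]
    group
  have b : σ n (j - 1) * σ n j * σ n (j - 1) = σ n j * σ n (j - 1) * σ n j := by
    have hk : j - 1 + 1 = j := by omega
    have := braid_rel n (i := j - 1) (by omega) (by omega)
    rwa [hk] at this
  rw [hbkljj, hs, bkl]
  calc bklPre n i j * (σ n (j - 1) * σ n j * (σ n (j - 1))⁻¹) * (bklPre n i j)⁻¹ *
        (bklPre n i j * σ n (j - 1) * (bklPre n i j)⁻¹)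
      = bklPre n i j * (σ n (j - 1) * σ n j) * (bklPre n i j)⁻¹ := by group
    _ = bklPre n i j * (σ n (j - 1) * σ n j * σ n (j - 1) * (σ n (j - 1))⁻¹) *
        (bklPre n i j)⁻¹ := by group
    _ = bklPre n i j * (σ n j * σ n (j - 1) * σ n j * (σ n (j - 1))⁻¹) *
        (bklPre n i j)⁻¹ := by rw [b]
    _ = bklPre n i j * σ n j * (σ n (j - 1) * σ n j * (σ n (j - 1))⁻¹) *
        (bklPre n i j)⁻¹ := by group
    _ = σ n j * bklPre n i j * (σ n (j - 1) * σ n j * (σ n (j - 1))⁻¹) *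
        (bklPre n i j)⁻¹ := by rw [← cP.eq]
    _ = σ n j * (bklPre n i j * (σ n (j - 1) * σ n j * (σ n (j - 1))⁻¹) *
        (bklPre n i j)⁻¹) := by group

/-- the band relation `a_{i,k} a_{i,j} = a_{j,k} a_{i,k}` for `1 ≤ i < j < k ≤ n`. -/
theorem bkl_band_relation' (n i j k : ℕ) (h1 : 1 ≤ i) (hij : i < j) (hjk : j < k)
    (hkn : k ≤ n) :
    bkl n i k * bkl n i j = bkl n j k * bkl n i k := by
  induction k with
  | zero => omega
  | succ k ih =>
    rcases Nat.lt_or_ge j k with hjk' | hjk'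
    · -- inductive step: j < k, so use the recurrence
      have hIH := ih hjk' (by omega)
      have r1 := bkl_rec n h1 (show i + 1 ≤ k by omega) hkn
      have r2 := bkl_rec n (show 1 ≤ j by omega) (show j + 1 ≤ k by omega) hkn
      have c : Commute (σ n k) (bkl n i j) := comm_bkl n (by omega) (by omega)
      rw [r1, r2]
      calc (σ n k)⁻¹ * bkl n i k * σ n k * bkl n i j
          = (σ n k)⁻¹ * bkl n i k * (σ n k * bkl n i j) := by group
        _ = (σ n k)⁻¹ * bkl n i k * (bkl n i j * σ n k) := by rw [c.eq]
        _ = (σ n k)⁻¹ * (bkl n i k * bkl n i j) * σ n k := by group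
        _ = (σ n k)⁻¹ * (bkl n j k * bkl n i k) * σ n k := by rw [hIH]
        _ = (σ n k)⁻¹ * bkl n j k * σ n k * ((σ n k)⁻¹ * bkl n i k * σ n k) := by group
    · -- base case: k = j
      have hk : k = j := by omega
      subst hk
      exact bkl_base n h1 hij hkn
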